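/- arXiv:1803.09009 — 2 statements merged into one kernel-verified Lean document; each statement's English description precedes it below -/
import Mathlib

section
/- Let α and α' be consecutive extended co-necklaces (of length 2n) in the reverse colexicographic listing of extended co-necklaces, with α before α'. Then the length-n prefix of α comes before the length-n prefix of α' in colexicographic order. -/
/-- A binary necklace: lexicographically least among all its cyclic rotations
(`false < true`). -/
def IsNecklace (w : List Bool) : Prop := ∀ r : ℕ, w ≤ w.rotate r

/-- β is a co-necklace if β followed by its bitwise complement is a necklace. -/
def IsCoNecklace (β : List Bool) : Prop := IsNecklace (β ++ β.map (fun b => !b))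

/-- The extended co-necklace associated to a co-necklace β. -/
def extCoNeck (β : List Bool) : List Bool := β ++ β.map (fun b => !b)

/-- Colexicographic strict order on equal-length strings. -/
def ColexLt (a b : List Bool) : Prop := a.reverse < b.reverse

/-- Splitting a lex comparison of appends with equal-length first parts. -/
lemma lex_append_elim : ∀ (a c b d : List Bool), a.length = c.length →
    List.Lex (· < ·) (a ++ b) (c ++ d) →
    List.Lex (· < ·) a c ∨ (a = c ∧ List.Lex (· < ·) b d)
  | [], [], b, d, _, h => Or.inr ⟨rfl, h⟩
  | x :: a, y :: c, b, d, hl, h => by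
    cases h with
    | rel hr => exact Or.inl (List.Lex.rel hr)
    | cons h' =>
      rcases lex_append_elim a c b d (by simpa using hl) h' with h1 | ⟨rfl, h2⟩
      · exact Or.inl (List.Lex.cons h1)
      · exact Or.inr ⟨rfl, h2⟩

/-- Complementation reverses lex order on equal-length bool strings. -/
lemma lex_map_not : ∀ (u v : List Bool), u.length = v.length →
    List.Lex (· < ·) u v →
    List.Lex (· < ·) (v.map (fun b => !b)) (u.map (fun b => !b))
  | _, [], _, h => absurd h List.not_lex_nil
  | [], y :: v, hl, _ => by simp at hl
  | x :: u, y :: v, hl, h => by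
    cases h with
    | rel hr =>
      have hx : x = false := by revert hr; cases x <;> cases y <;> decide
      have hy : y = true := by revert hr; cases x <;> cases y <;> decide
      subst hx; subst hy
      exact List.Lex.rel (by decide)
    | cons h' =>
      exact List.Lex.cons (lex_map_not u v (by simpa using hl) h')

theorem stmt_5 (n : ℕ) (β β' : List Bool)
    (hβlen : β.length = n) (hβ'len : β'.length = n)
    (hβ : IsCoNecklace β) (hβ' : IsCoNecklace β')
    -- α = extCoNeck β comes before α' = extCoNeck β' in reverse colex order
    (hlt : ColexLt (extCoNeck β') (extCoNeck β))
    (hadj : ∀ γ : List Bool, γ.length = n → IsCoNecklace γ →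
      ¬ (ColexLt (extCoNeck γ) (extCoNeck β) ∧ ColexLt (extCoNeck β') (extCoNeck γ))) :
    ColexLt ((extCoNeck β).take n) ((extCoNeck β').take n) := by
  have htake : (extCoNeck β).take n = β := by
    simpa [extCoNeck] using List.take_left' (l₂ := β.map (fun b => !b)) hβlen
  have htake' : (extCoNeck β').take n = β' := by
    simpa [extCoNeck] using List.take_left' (l₂ := β'.map (fun b => !b)) hβ'len
  rw [htake, htake']
  unfold ColexLt at hlt ⊢
  unfold extCoNeck at hlt
  replace hlt : List.Lex (· < ·) (β' ++ List.map (fun b => !b) β').reverse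
      (β ++ List.map (fun b => !b) β).reverse := hlt
  show List.Lex (· < ·) β.reverse β'.reverse
  rw [List.reverse_append, List.reverse_append] at hlt
  have hl : (β'.map (fun b => !b)).reverse.length = (β.map (fun b => !b)).reverse.length := by
    simp [hβlen, hβ'len]
  rcases lex_append_elim _ _ _ _ hl hlt with h1 | ⟨heq, h2⟩
  · have := lex_map_not _ _ hl h1
    rw [← List.map_reverse, ← List.map_reverse, List.map_map, List.map_map] at this
    simpa [Function.comp_def] using this
  · -- the complement halves agree, so β = β', contradicting strictness
    have hββ' : β = β' := by
      have := List.reverse_injective heq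
      have h3 : β'.map (fun b => !b) = β.map (fun b => !b) := this
      have : β'.map ((fun b => !b) ∘ (fun b => !b)) = β.map ((fun b => !b) ∘ (fun b => !b)) := by
        rw [← List.map_map, ← List.map_map, h3]
      simpa [Function.comp_def] using this.symm
    subst hββ'
    exact absurd rfl (List.Lex.to_ne (List.Lex.imp (fun a b hab => ne_of_lt hab) _ _ h2))
end

section
/- If β is a binary co-necklace of length n and 1 ≤ s ≤ n with b_s ≠ 0 (writing β = b_1...b_n), then the string 0^{s−1} b_s b_{s+1} ... b_n is also a co-necklace of length n. -/
lemma lt_of_eq_upto (k : ℕ) : ∀ (l₁ l₂ : List Bool),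
    (∀ i < k, l₁[i]? = l₂[i]?) → l₁[k]? = some false → l₂[k]? = some true → l₁ < l₂ := by
  induction k with
  | zero =>
    intro l₁ l₂ _ h1 h2
    match l₁, l₂ with
    | a :: t₁, b :: t₂ =>
      simp at h1 h2
      subst h1; subst h2
      exact List.Lex.rel (by decide)
  | succ k ih =>
    intro l₁ l₂ heq h1 h2
    match l₁, l₂ with
    | a :: t₁, b :: t₂ =>
      have h0 := heq 0 (Nat.succ_pos _)
      simp at h0
      subst h0
      exact List.Lex.cons (ih t₁ t₂ (fun i hi => by
        have := heq (i+1) (by omega); simpa using this) (by simpa using h1) (by simpa using h2))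

theorem stmt_7 (n s : ℕ) (β : List Bool)
    (hβlen : β.length = n) (hβ : IsCoNecklace β)
    (hs1 : 1 ≤ s) (hsn : s ≤ n)
    (hbs : β[s - 1]? ≠ some false) :
    IsCoNecklace (List.replicate (s - 1) false ++ β.drop (s - 1)) := by
  set t := s - 1 with htdef
  have htn : t < n := by omega
  have hn1 : 1 ≤ n := by omega
  -- B i : the i-th bit of β
  set B : ℕ → Bool := fun i => (β[i]?).getD false with hBdef
  have hB : ∀ i, i < n → β[i]? = some (B i) := by
    intro i hi
    have hi' : i < β.length := by omega
    rw [List.getElem?_eq_getElem hi']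
    simp [hBdef, List.getElem?_eq_getElem hi']
  have hBt : B t = true := by
    have h := hB t htn
    rw [h] at hbs
    cases hbt : B t
    · rw [hbt] at hbs; simp at hbs
    · rfl
  by_cases hall : β.take t = List.replicate t false
  · have : List.replicate t false ++ β.drop t = β := by
      rw [← hall, List.take_append_drop]
    rw [this]; exact hβ
  -- there is a first 1 in β before position t
  have hex : ∃ i, i < t ∧ B i = true := by
    by_contra hc
    push_neg at hc
    apply hall
    apply List.ext_getElem?
    intro i
    rw [List.getElem?_take, List.getElem?_replicate]
    by_cases hi : i < t
    · rw [if_pos hi, if_pos hi, hB i (by omega)]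
      have := hc i hi
      simp [Bool.not_eq_true] at this
      rw [this]
    · rw [if_neg hi, if_neg hi]
  set j := Nat.find hex with hjdef
  obtain ⟨hjt, hBj⟩ : j < t ∧ B j = true := Nat.find_spec hex
  have hBlt : ∀ i, i < j → B i = false := by
    intro i hij
    have := Nat.find_min hex hij
    push_neg at this
    by_cases hit : i < t
    · simpa using this hit
    · omega
  -- the strings w = β β̄ and u = γ γ̄
  set f : Bool → Bool := fun b => !b with hfdef
  set w : List Bool := β ++ β.map f with hwdef
  set γ : List Bool := List.replicate t false ++ β.drop t with hγdef
  set u : List Bool := γ ++ γ.map f with hudef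
  have hγlen : γ.length = n := by
    simp [hγdef, List.length_replicate, List.length_drop, hβlen]; omega
  have hulen : u.length = 2 * n := by
    simp [hudef, hγlen]; omega
  have hwlen : w.length = 2 * n := by
    simp [hwdef, hβlen]; omega
  have hγval : ∀ i, i < n → γ[i]? = some (if i < t then false else B i) := by
    intro i hi
    rw [hγdef, List.getElem?_append]
    simp only [List.length_replicate]
    by_cases hit : i < t
    · rw [if_pos hit, List.getElem?_replicate, if_pos hit, if_pos hit]
    · rw [if_neg hit, List.getElem?_drop, if_neg hit]
      have : t + (i - t) = i := by omega
      rw [this, hB i hi]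
  -- point values of u
  have hu1 : ∀ i, i < t → u[i]? = some false := by
    intro i hi
    rw [hudef, List.getElem?_append, if_pos (by omega : i < γ.length), hγval i (by omega),
      if_pos hi]
  have hu2 : ∀ i, t ≤ i → i < n → u[i]? = some (B i) := by
    intro i h1 h2
    rw [hudef, List.getElem?_append, if_pos (by omega : i < γ.length), hγval i h2,
      if_neg (by omega)]
  have hu3 : ∀ i, n ≤ i → i < n + t → u[i]? = some true := by
    intro i h1 h2
    rw [hudef, List.getElem?_append, if_neg (by omega : ¬ i < γ.length), List.getElem?_map,
      hγlen, hγval (i - n) (by omega), if_pos (by omega)]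
    rfl
  have hu4 : ∀ i, n + t ≤ i → i < 2 * n → u[i]? = some (!B (i - n)) := by
    intro i h1 h2
    rw [hudef, List.getElem?_append, if_neg (by omega : ¬ i < γ.length), List.getElem?_map,
      hγlen, hγval (i - n) (by omega), if_neg (by omega)]
    rfl
  -- point values of w
  have hw1 : ∀ i, i < n → w[i]? = some (B i) := by
    intro i hi
    rw [hwdef, List.getElem?_append, if_pos (by omega : i < β.length), hB i hi]
  have hw2 : ∀ i, n ≤ i → i < 2 * n → w[i]? = some (!B (i - n)) := by
    intro i h1 h2
    rw [hwdef, List.getElem?_append, if_neg (by omega : ¬ i < β.length), List.getElem?_map,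
      hβlen, hB (i - n) (by omega)]
    rfl
  -- rotations
  have hur : ∀ (r i : ℕ), i < 2 * n → (u.rotate r)[i]? = u[(i + r) % (2 * n)]? := by
    intro r i hi
    rw [List.getElem?_rotate (by omega), hulen]
  have hwr : ∀ (r i : ℕ), i < 2 * n → (w.rotate r)[i]? = w[(i + r) % (2 * n)]? := by
    intro r i hi
    rw [List.getElem?_rotate (by omega), hwlen]
  have hβ' : ∀ r, w ≤ w.rotate r := hβ
  -- main goal
  intro r
  show u ≤ u.rotate r
  have hmodrot : u.rotate r = u.rotate (r % (2 * n)) := by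
    conv_rhs => rw [← hulen, List.rotate_mod]
  rw [hmodrot]
  set r' := r % (2 * n) with hr'def
  have hr'lt : r' < 2 * n := Nat.mod_lt _ (by omega)
  rcases Nat.eq_zero_or_pos r' with h0 | hpos
  · rw [h0, List.rotate_zero]
  have hmodeq : ∀ i, i + r' < 2 * n → (i + r') % (2 * n) = i + r' := fun i hi =>
    Nat.mod_eq_of_lt hi
  have hmodsub : ∀ i, i < 2 * n → 2 * n ≤ i + r' → (i + r') % (2 * n) = i + r' - 2 * n := by
    intro i hi2 hi
    rw [Nat.mod_eq_sub_mod hi, Nat.mod_eq_of_lt (by omega)]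
  by_cases ha : r' < t
  · -- case (a): 1 ≤ r' < t
    apply le_of_lt
    apply lt_of_eq_upto (t - r')
    · intro i hi
      rw [hu1 i (by omega), hur r' i (by omega), hmodeq i (by omega), hu1 (i + r') (by omega)]
    · exact hu1 _ (by omega)
    · rw [hur r' (t - r') (by omega), hmodeq _ (by omega),
        (by omega : t - r' + r' = t), hu2 t le_rfl htn, hBt]
  by_cases hb : r' < n
  · -- case (b): t ≤ r' < n
    apply le_of_lt
    have h1 : u < w := by
      apply lt_of_eq_upto j
      · intro i hi
        rw [hu1 i (by omega), hw1 i (by omega), hBlt i hi]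
      · exact hu1 _ (by omega)
      · rw [hw1 j (by omega), hBj]
    have h3 : w.rotate r' < u.rotate r' := by
      apply lt_of_eq_upto (n + j - r')
      · intro i hi
        rw [hwr r' i (by omega), hur r' i (by omega), hmodeq i (by omega)]
        by_cases hin : i + r' < n
        · rw [hw1 _ hin, hu2 _ (by omega) hin]
        · rw [hw2 _ (by omega) (by omega), hu3 _ (by omega) (by omega),
            hBlt (i + r' - n) (by omega)]
          rfl
      · rw [hwr r' _ (by omega), hmodeq _ (by omega), (by omega : n + j - r' + r' = n + j),
          hw2 _ (by omega) (by omega), (by omega : n + j - n = j), hBj]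
        rfl
      · rw [hur r' _ (by omega), hmodeq _ (by omega), (by omega : n + j - r' + r' = n + j),
          hu3 _ (by omega) (by omega)]
    exact lt_trans h1 (lt_of_le_of_lt (hβ' r') h3)
  by_cases hc : r' < n + t
  · -- case (c): n ≤ r' < n + t
    apply le_of_lt
    apply lt_of_eq_upto 0
    · intro i hi; omega
    · exact hu1 0 (by omega)
    · rw [hur r' 0 (by omega), hmodeq 0 (by omega), Nat.zero_add, hu3 r' (by omega) hc]
  · -- case (d): n + t ≤ r' < 2n
    set m' := min (2 * n - r') (j + 1) with hm'def
    by_cases hone : ∀ k, k < m' → B (r' + k - n) = true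
    · exfalso
      have hlt : w.rotate r' < w := by
        apply lt_of_eq_upto j
        · intro i hi
          rw [hwr r' i (by omega), hw1 i (by omega), hBlt i hi]
          by_cases hin : i + r' < 2 * n
          · rw [hmodeq i hin, hw2 _ (by omega) (by omega),
              (by omega : i + r' - n = r' + i - n), hone i (by omega)]
            rfl
          · rw [hmodsub i (by omega) (by omega), hw1 _ (by omega),
              hBlt (i + r' - 2 * n) (by omega)]
        · by_cases hin : j + r' < 2 * n
          · rw [hwr r' j (by omega), hmodeq j hin, hw2 _ (by omega) (by omega),
              (by omega : j + r' - n = r' + j - n), hone j (by omega)]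
            rfl
          · rw [hwr r' j (by omega), hmodsub j (by omega) (by omega), hw1 _ (by omega),
              hBlt (j + r' - 2 * n) (by omega)]
        · rw [hw1 j (by omega), hBj]
      exact absurd (hβ' r') (not_le_of_gt hlt)
    · push_neg at hone
      have hex2 : ∃ k, k < m' ∧ B (r' + k - n) = false := by
        obtain ⟨k, hk1, hk2⟩ := hone
        exact ⟨k, hk1, by simpa using hk2⟩
      set k := Nat.find hex2 with hkdef
      obtain ⟨hkm, hBk⟩ : k < m' ∧ B (r' + k - n) = false := Nat.find_spec hex2
      have hkmin : ∀ i, i < k → B (r' + i - n) = true := by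
        intro i hik
        have := Nat.find_min hex2 hik
        push_neg at this
        simpa using this (by omega)
      apply le_of_lt
      apply lt_of_eq_upto k
      · intro i hi
        rw [hu1 i (by omega), hur r' i (by omega), hmodeq i (by omega),
          hu4 _ (by omega) (by omega), (by omega : i + r' - n = r' + i - n), hkmin i hi]
        rfl
      · exact hu1 k (by omega)
      · rw [hur r' k (by omega), hmodeq k (by omega), hu4 _ (by omega) (by omega),
          (by omega : k + r' - n = r' + k - n), hBk]
        rfl
end
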